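/- arXiv:1603.04834 — 2 statements merged into one kernel-verified Lean document; each statement's English description precedes it below -/
import Mathlib

section
/- Let R ≥ 1, let D ∈ ℂ^{R×R} be Hermitian positive definite, let Rm and Q ∈ ℂ^{R×R} be Hermitian positive semidefinite, and let ζ > 0 and σ_D² > 0 be real. Set B := D^{-1/2} (Rm − ζ Q) D^{-1/2}, where D^{-1/2} is the inverse of the positive definite square root of D, and assume λ_max(B) > 0. Then the optimal value of the second-stage beamforming problem sup { (w^H D w)^{-1} : w ∈ ℂ^R, w^H Rm w ≥ ζ (σ_D² + w^H Q w) } equals λ_max(B) / (ζ σ_D²). -/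
open Matrix
open scoped ComplexOrder InnerProductSpace

/-- The largest real eigenvalue of a complex matrix (for Hermitian matrices this is
the largest eigenvalue `λ_max`). -/
noncomputable def lambdaMax {R : ℕ} (A : Matrix (Fin R) (Fin R) ℂ) : ℝ :=
  sSup {x : ℝ | ∃ v : Fin R → ℂ, v ≠ 0 ∧ A.mulVec v = (x : ℂ) • v}

/-- The square root of a positive semidefinite matrix, as `Matrix.PosSemidef.sqrt` was
defined in the older Mathlib (removed since). -/
noncomputable def Matrix.PosSemidef.sqrt {n 𝕜 : Type*} [Fintype n] [RCLike 𝕜] [DecidableEq n]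
    {A : Matrix n n 𝕜} (hA : A.PosSemidef) : Matrix n n 𝕜 :=
  hA.1.eigenvectorUnitary.1 * diagonal ((↑) ∘ (√·) ∘ hA.1.eigenvalues) *
    (star hA.1.eigenvectorUnitary : Matrix n n 𝕜)

lemma sqrt_herm' {n 𝕜 : Type*} [Fintype n] [RCLike 𝕜] [DecidableEq n]
    {A : Matrix n n 𝕜} (hA : A.PosSemidef) :
    (Matrix.PosSemidef.sqrt hA)ᴴ = Matrix.PosSemidef.sqrt hA := by
  have hv : IsSelfAdjoint (((↑) ∘ (√·) ∘ hA.1.eigenvalues) : n → 𝕜) := by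
    show star _ = _
    funext i
    simp
  exact isHermitian_mul_mul_conjTranspose _ (isHermitian_diagonal_of_self_adjoint _ hv)

lemma sqrt_mul_self' {n 𝕜 : Type*} [Fintype n] [RCLike 𝕜] [DecidableEq n]
    {A : Matrix n n 𝕜} (hA : A.PosSemidef) :
    Matrix.PosSemidef.sqrt hA * Matrix.PosSemidef.sqrt hA = A := by
  have hU := Matrix.mem_unitaryGroup_iff'.mp hA.1.eigenvectorUnitary.2
  have hd : diagonal (((↑) ∘ (√·) ∘ hA.1.eigenvalues) : n → 𝕜) *
      diagonal ((↑) ∘ (√·) ∘ hA.1.eigenvalues)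
      = diagonal (RCLike.ofReal ∘ hA.1.eigenvalues) := by
    rw [diagonal_mul_diagonal]
    congr 1
    ext i
    simp only [Function.comp]
    rw [← RCLike.ofReal_mul, Real.mul_self_sqrt (hA.eigenvalues_nonneg i)]
  conv_rhs => rw [hA.1.spectral_theorem, Unitary.conjStarAlgAut_apply]
  simp only [Matrix.PosSemidef.sqrt, Matrix.mul_assoc, Unitary.coe_star]
  rw [← Matrix.mul_assoc (star _) (hA.1.eigenvectorUnitary : Matrix n n 𝕜), hU, Matrix.one_mul,
    ← Matrix.mul_assoc (diagonal _) (diagonal _), hd]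

section Aux

variable {R : ℕ} {A : Matrix (Fin R) (Fin R) ℂ} (hA : A.IsHermitian)

lemma vecMul_eigen (i : Fin R) :
    star ⇑(hA.eigenvectorBasis i) ᵥ* A
      = (hA.eigenvalues i : ℂ) • star ⇑(hA.eigenvectorBasis i) := by
  have h1 : star (Aᴴ *ᵥ ⇑(hA.eigenvectorBasis i)) = star ⇑(hA.eigenvectorBasis i) ᵥ* Aᴴᴴ :=
    star_mulVec _ _
  rw [conjTranspose_conjTranspose, hA.eq] at h1
  rw [← h1, hA.mulVec_eigenvectorBasis]
  ext j
  simp [Complex.real_smul]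

lemma eigen_dot (i : Fin R) (v : Fin R → ℂ) :
    star ⇑(hA.eigenvectorBasis i) ⬝ᵥ (A *ᵥ v)
      = (hA.eigenvalues i : ℂ) * (star ⇑(hA.eigenvectorBasis i) ⬝ᵥ v) := by
  rw [dotProduct_mulVec, vecMul_eigen hA i, smul_dotProduct, smul_eq_mul]

lemma eigen_set_eq :
    {x : ℝ | ∃ v : Fin R → ℂ, v ≠ 0 ∧ A.mulVec v = (x : ℂ) • v}
      = Set.range hA.eigenvalues := by
  ext x
  constructor
  · rintro ⟨v, hv, hAv⟩
    have hv' : (WithLp.equiv 2 (Fin R → ℂ)).symm v ≠ 0 := by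
      simpa using hv
    have : ∃ i, star ⇑(hA.eigenvectorBasis i) ⬝ᵥ v ≠ 0 := by
      by_contra h
      push_neg at h
      apply hv'
      have hrep : hA.eigenvectorBasis.repr ((WithLp.equiv 2 (Fin R → ℂ)).symm v) = 0 := by
        ext i
        rw [OrthonormalBasis.repr_apply_apply]
        simpa [EuclideanSpace.inner_eq_star_dotProduct, dotProduct_comm] using h i
      simpa using congrArg hA.eigenvectorBasis.repr.symm hrep
    obtain ⟨i, hi⟩ := this
    refine ⟨i, ?_⟩
    have h1 := eigen_dot hA i v
    rw [hAv] at h1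
    rw [dotProduct_smul, smul_eq_mul] at h1
    rcases mul_eq_mul_right_iff.mp h1 with h | h
    · exact_mod_cast h.symm
    · exact absurd h hi
  · rintro ⟨i, rfl⟩
    exact ⟨⇑(hA.eigenvectorBasis i), by simpa using hA.eigenvectorBasis.orthonormal.ne_zero i,
      by rw [hA.mulVec_eigenvectorBasis]; ext j; simp [Complex.real_smul]⟩

lemma quad_le (lam : ℝ) (hub : ∀ i, hA.eigenvalues i ≤ lam) (u : Fin R → ℂ) :
    (star u ⬝ᵥ A *ᵥ u).re ≤ lam * (star u ⬝ᵥ u).re := by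
  classical
  set b := hA.eigenvectorBasis with hb
  set c : Fin R → ℂ := fun i => star ⇑(b i) ⬝ᵥ u with hc
  have hterm : ∀ i, (⟪(WithLp.equiv 2 (Fin R → ℂ)).symm u, b i⟫_ℂ) = (starRingEnd ℂ) (c i) := by
    intro i
    rw [← inner_conj_symm, EuclideanSpace.inner_eq_star_dotProduct, dotProduct_comm]
    rfl
  have key : star u ⬝ᵥ (A *ᵥ u)
      = ∑ i, (hA.eigenvalues i : ℂ) * ((starRingEnd ℂ) (c i) * c i) := by
    have h0 := b.sum_inner_mul_inner ((WithLp.equiv 2 (Fin R → ℂ)).symm u)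
      ((WithLp.equiv 2 (Fin R → ℂ)).symm (A *ᵥ u))
    have : star u ⬝ᵥ (A *ᵥ u)
        = (⟪(WithLp.equiv 2 (Fin R → ℂ)).symm u, (WithLp.equiv 2 (Fin R → ℂ)).symm (A *ᵥ u)⟫_ℂ) :=
      by rw [EuclideanSpace.inner_eq_star_dotProduct]; exact dotProduct_comm _ _
    rw [this, ← h0]
    refine Finset.sum_congr rfl fun i _ => ?_
    have h1 : (⟪b i, (WithLp.equiv 2 (Fin R → ℂ)).symm (A *ᵥ u)⟫_ℂ)
        = (hA.eigenvalues i : ℂ) * c i := by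
      rw [EuclideanSpace.inner_eq_star_dotProduct, dotProduct_comm]
      show star ⇑(b i) ⬝ᵥ (A *ᵥ u) = _
      rw [eigen_dot hA i u]
    rw [h1, hterm i]; ring
  have key2 : star u ⬝ᵥ u = ∑ i, (starRingEnd ℂ) (c i) * c i := by
    have h0 := b.sum_inner_mul_inner ((WithLp.equiv 2 (Fin R → ℂ)).symm u)
      ((WithLp.equiv 2 (Fin R → ℂ)).symm u)
    have : star u ⬝ᵥ u
        = (⟪(WithLp.equiv 2 (Fin R → ℂ)).symm u, (WithLp.equiv 2 (Fin R → ℂ)).symm u⟫_ℂ) := by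
        rw [EuclideanSpace.inner_eq_star_dotProduct]; exact dotProduct_comm _ _
    rw [this, ← h0]
    refine Finset.sum_congr rfl fun i _ => ?_
    rw [hterm i]
    rw [EuclideanSpace.inner_eq_star_dotProduct, dotProduct_comm]
    rfl
  rw [key, key2, Complex.re_sum, Complex.re_sum, Finset.mul_sum]
  refine Finset.sum_le_sum fun i _ => ?_
  have hcc : (starRingEnd ℂ) (c i) * c i = (Complex.normSq (c i) : ℂ) :=
    (Complex.normSq_eq_conj_mul_self).symm
  rw [hcc, ← Complex.ofReal_mul, Complex.ofReal_re, Complex.ofReal_re]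
  exact mul_le_mul_of_nonneg_right (hub i) (Complex.normSq_nonneg _)

lemma quad_conj (S M : Matrix (Fin R) (Fin R) ℂ) (hS : Sᴴ = S) (w : Fin R → ℂ) :
    star (S *ᵥ w) ⬝ᵥ (M *ᵥ (S *ᵥ w)) = star w ⬝ᵥ ((S * M * S) *ᵥ w) := by
  simp [star_mulVec, hS, mulVec_mulVec, dotProduct_mulVec, vecMul_vecMul, Matrix.mul_assoc]

lemma norm_conj (S : Matrix (Fin R) (Fin R) ℂ) (hS : Sᴴ = S) (w : Fin R → ℂ) :
    star (S *ᵥ w) ⬝ᵥ (S *ᵥ w) = star w ⬝ᵥ ((S * S) *ᵥ w) := by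
  simp [star_mulVec, hS, dotProduct_mulVec, vecMul_vecMul]

end Aux

theorem stmt0 {R : ℕ} (hR : 1 ≤ R)
    (D Rm Q : Matrix (Fin R) (Fin R) ℂ)
    (hD : D.PosDef) (hRm : Rm.PosSemidef) (hQ : Q.PosSemidef)
    (ζ σD2 : ℝ) (hζ : 0 < ζ) (hσ : 0 < σD2)
    (B : Matrix (Fin R) (Fin R) ℂ)
    (hB : B = (Matrix.PosSemidef.sqrt hD.posSemidef)⁻¹ * (Rm - (ζ : ℂ) • Q) * (Matrix.PosSemidef.sqrt hD.posSemidef)⁻¹)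
    (hlam : 0 < lambdaMax B) :
    sSup {v : ℝ | ∃ w : Fin R → ℂ,
        ζ * (σD2 + (star w ⬝ᵥ Q.mulVec w).re) ≤ (star w ⬝ᵥ Rm.mulVec w).re ∧
        v = ((star w ⬝ᵥ D.mulVec w).re)⁻¹} = lambdaMax B / (ζ * σD2) := by
  classical
  have hσζ : 0 < ζ * σD2 := mul_pos hζ hσ
  set Sm := Matrix.PosSemidef.sqrt hD.posSemidef with hSm
  have hSH : Smᴴ = Sm := sqrt_herm' hD.posSemidef
  have hSS : Sm * Sm = D := sqrt_mul_self' hD.posSemidef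
  have hdet : IsUnit Sm.det := by
    have h2 : Sm.det * Sm.det = D.det := by rw [← det_mul, hSS]
    have h3 : D.det ≠ 0 := hD.det_pos.ne'
    refine isUnit_iff_ne_zero.mpr fun h => h3 ?_
    rw [← h2, h, mul_zero]
  have hinv1 : Sm * Sm⁻¹ = 1 := mul_nonsing_inv _ hdet
  have hinv2 : Sm⁻¹ * Sm = 1 := nonsing_inv_mul _ hdet
  have hSBS : Sm * B * Sm = Rm - (ζ : ℂ) • Q := by
    rw [hB]
    calc Sm * (Sm⁻¹ * (Rm - (ζ : ℂ) • Q) * Sm⁻¹) * Sm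
        = Sm * (Sm⁻¹ * ((Rm - (ζ : ℂ) • Q) * (Sm⁻¹ * Sm))) := by
          simp only [Matrix.mul_assoc]
      _ = Rm - (ζ : ℂ) • Q := by
          rw [hinv2, Matrix.mul_one, ← Matrix.mul_assoc, hinv1, Matrix.one_mul]
  have hMH : (Rm - (ζ : ℂ) • Q)ᴴ = Rm - (ζ : ℂ) • Q := by
    rw [conjTranspose_sub, conjTranspose_smul, hRm.1, hQ.1]
    simp [Complex.star_def, Complex.conj_ofReal]
  have hXI : (Sm⁻¹)ᴴ = Sm⁻¹ := by rw [conjTranspose_nonsing_inv, hSH]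
  have hBH : B.IsHermitian := by
    show Bᴴ = B
    rw [hB]
    simp only [conjTranspose_mul, hXI, hMH, Matrix.mul_assoc]
  -- quadratic form identities
  have eB : ∀ w : Fin R → ℂ, (star (Sm *ᵥ w) ⬝ᵥ (B *ᵥ (Sm *ᵥ w))).re
      = (star w ⬝ᵥ Rm *ᵥ w).re - ζ * (star w ⬝ᵥ Q *ᵥ w).re := by
    intro w
    rw [quad_conj Sm B hSH w, hSBS, sub_mulVec, dotProduct_sub, smul_mulVec,
      dotProduct_smul, smul_eq_mul]
    simp [Complex.sub_re, Complex.mul_re]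
  have eD : ∀ w : Fin R → ℂ, (star (Sm *ᵥ w) ⬝ᵥ (Sm *ᵥ w)).re = (star w ⬝ᵥ D *ᵥ w).re := by
    intro w
    rw [norm_conj Sm hSH w, hSS]
  -- rewrite the feasible set
  have hset : {v : ℝ | ∃ w : Fin R → ℂ,
        ζ * (σD2 + (star w ⬝ᵥ Q.mulVec w).re) ≤ (star w ⬝ᵥ Rm.mulVec w).re ∧
        v = ((star w ⬝ᵥ D.mulVec w).re)⁻¹}
      = {v : ℝ | ∃ u : Fin R → ℂ,
        ζ * σD2 ≤ (star u ⬝ᵥ B *ᵥ u).re ∧ v = ((star u ⬝ᵥ u).re)⁻¹} := by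
    ext v
    constructor
    · rintro ⟨w, hcon, rfl⟩
      refine ⟨Sm *ᵥ w, ?_, ?_⟩
      · rw [eB w]; linarith [mul_add ζ σD2 (star w ⬝ᵥ Q *ᵥ w).re ▸ hcon]
      · rw [eD w]
    · rintro ⟨u, hcon, rfl⟩
      have hu : Sm *ᵥ (Sm⁻¹ *ᵥ u) = u := by rw [mulVec_mulVec, hinv1, one_mulVec]
      refine ⟨Sm⁻¹ *ᵥ u, ?_, ?_⟩
      · have := eB (Sm⁻¹ *ᵥ u); rw [hu] at this; rw [mul_add]; linarith
      · have := eD (Sm⁻¹ *ᵥ u); rw [hu] at this; rw [← this]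
  -- eigenvalue facts
  have hlamset : lambdaMax B = sSup (Set.range hBH.eigenvalues) := by
    rw [lambdaMax, eigen_set_eq hBH]
  have hne : (Set.range hBH.eigenvalues).Nonempty := ⟨_, ⟨⟨0, hR⟩, rfl⟩⟩
  have hfin : (Set.range hBH.eigenvalues).Finite := Set.finite_range _
  have hmem : lambdaMax B ∈ Set.range hBH.eigenvalues := by
    rw [hlamset]; exact hne.csSup_mem hfin
  have hub : ∀ i, hBH.eigenvalues i ≤ lambdaMax B := by
    intro i; rw [hlamset]; exact le_csSup hfin.bddAbove ⟨i, rfl⟩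
  rw [hset]
  -- upper bound
  have hubv : ∀ v ∈ {v : ℝ | ∃ u : Fin R → ℂ,
      ζ * σD2 ≤ (star u ⬝ᵥ B *ᵥ u).re ∧ v = ((star u ⬝ᵥ u).re)⁻¹},
      v ≤ lambdaMax B / (ζ * σD2) := by
    rintro v ⟨u, hcon, rfl⟩
    have h1 : (star u ⬝ᵥ B *ᵥ u).re ≤ lambdaMax B * (star u ⬝ᵥ u).re :=
      quad_le hBH _ hub u
    set t := (star u ⬝ᵥ u).re with ht
    have h2 : ζ * σD2 ≤ lambdaMax B * t := le_trans hcon h1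
    have htpos : 0 < t := by nlinarith
    rw [le_div_iff₀ hσζ, inv_mul_le_iff₀ htpos]
    nlinarith
  -- the witness
  obtain ⟨i, hi⟩ := hmem
  set bv : Fin R → ℂ := ⇑(hBH.eigenvectorBasis i) with hbv
  have hbv1 : star bv ⬝ᵥ bv = 1 := by
    have h1 : (⟪hBH.eigenvectorBasis i, hBH.eigenvectorBasis i⟫_ℂ) = 1 := by
      rw [inner_self_eq_norm_sq_to_K]
      simp [hBH.eigenvectorBasis.orthonormal.1 i]
    rw [dotProduct_comm]
    exact h1
  have hbe : B *ᵥ bv = (lambdaMax B : ℂ) • bv := by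
    rw [hbv, hBH.mulVec_eigenvectorBasis, hi]
    ext j
    simp [Complex.real_smul]
  set cr := Real.sqrt (ζ * σD2 / lambdaMax B) with hcr
  have hc2 : cr ^ 2 = ζ * σD2 / lambdaMax B := Real.sq_sqrt (by positivity)
  set u : Fin R → ℂ := (cr : ℂ) • bv with hu
  have e1 : star u ⬝ᵥ (B *ᵥ u) = ((cr ^ 2 * lambdaMax B : ℝ) : ℂ) := by
    rw [hu, mulVec_smul, hbe, star_smul, smul_dotProduct, dotProduct_smul, dotProduct_smul,
      hbv1]
    push_cast
    simp [Complex.star_def, Complex.conj_ofReal]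
    ring
  have e2 : star u ⬝ᵥ u = ((cr ^ 2 : ℝ) : ℂ) := by
    rw [hu, star_smul, smul_dotProduct, dotProduct_smul, hbv1]
    push_cast
    simp [Complex.star_def, Complex.conj_ofReal]
    ring
  have hmemv : lambdaMax B / (ζ * σD2) ∈ {v : ℝ | ∃ u : Fin R → ℂ,
      ζ * σD2 ≤ (star u ⬝ᵥ B *ᵥ u).re ∧ v = ((star u ⬝ᵥ u).re)⁻¹} := by
    refine ⟨u, ?_, ?_⟩
    · rw [e1, Complex.ofReal_re, hc2, div_mul_cancel₀ _ hlam.ne']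
    · rw [e2, Complex.ofReal_re, hc2, inv_div]
  exact le_antisymm (csSup_le ⟨_, hmemv⟩ hubv)
    (le_csSup ⟨lambdaMax B / (ζ * σD2), hubv⟩ hmemv)
end

section
/- Fundamental lemma of stochastic control, finite-action version (used to pass from the first-stage problem (10) to the pointwise problem (12)): let (Ω, F, P) be a probability space, let E be a measurable space, let X : Ω → E be measurable, let A be a nonempty finite set, and for each a ∈ A let φ_a : Ω → ℝ be integrable. Then sup { E[ φ_{g(X)} ] : g : E → A measurable } = E[ max_{a ∈ A} E[ φ_a | σ(X) ] ], where E[ φ_{g(X)} ] denotes the integral of ω ↦ φ_{g(X(ω))}(ω); moreover the supremum over measurable policies g is attained. -/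
open MeasureTheory ProbabilityTheory

private lemma integrable_sup'_aux {Ω : Type*} {F : MeasurableSpace Ω} {P : Measure Ω}
    {A : Type*} (s : Finset A) (hs : s.Nonempty) (ψ : A → Ω → ℝ)
    (h : ∀ a, Integrable (ψ a) P) :
    Integrable (fun ω => s.sup' hs fun a => ψ a ω) P := by
  induction hs using Finset.Nonempty.cons_induction with
  | singleton a => simpa using h a
  | cons a s ha hs ih =>
      simp only [Finset.sup'_cons hs]
      exact (h a).sup ih

theorem stmt16 {Ω : Type*} {F : MeasurableSpace Ω} (P : Measure Ω) [IsProbabilityMeasure P]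
    {E : Type*} [MeasurableSpace E] (X : Ω → E) (hX : Measurable X)
    {A : Type*} [Fintype A] [Nonempty A]
    (φ : A → Ω → ℝ) (hφ : ∀ a, Integrable (φ a) P) :
    IsGreatest
      {v : ℝ | ∃ g : E → A, (∀ a, MeasurableSet {e | g e = a}) ∧
        v = ∫ ω, φ (g (X ω)) ω ∂P}
      (∫ ω, Finset.univ.sup' Finset.univ_nonempty
        (fun a => (P[φ a | MeasurableSpace.comap X inferInstance]) ω) ∂P) := by
  classical
  have hm : MeasurableSpace.comap X inferInstance ≤ F := hX.comap_le
  set ψ : A → Ω → ℝ := fun a => P[φ a | MeasurableSpace.comap X inferInstance] with hψ_def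
  set M : Ω → ℝ := fun ω => Finset.univ.sup' Finset.univ_nonempty fun a => ψ a ω with hM_def
  have hψint : ∀ a, Integrable (ψ a) P := fun a => integrable_condExp
  have hMint : Integrable M P := integrable_sup'_aux _ _ ψ hψint
  have hψm : ∀ a, Measurable[MeasurableSpace.comap X inferInstance] (ψ a) :=
    fun a => stronglyMeasurable_condExp.measurable
  have hψleM : ∀ a ω, ψ a ω ≤ M ω := fun a ω =>
    Finset.le_sup' (fun b => ψ b ω) (Finset.mem_univ a)
  -- key decomposition
  have key : ∀ (g : E → A), (∀ a, MeasurableSet {e | g e = a}) →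
      ∀ (h : A → Ω → ℝ), (∀ a, Integrable (h a) P) →
      ∫ ω, h (g (X ω)) ω ∂P = ∑ a, ∫ ω in X ⁻¹' {e | g e = a}, h a ω ∂P := by
    intro g hg h hint
    have hfib : ∀ a, MeasurableSet (X ⁻¹' {e | g e = a}) := fun a => hX (hg a)
    have hpt : ∀ ω, h (g (X ω)) ω =
        ∑ a, (X ⁻¹' {e | g e = a}).indicator (h a) ω := by
      intro ω
      rw [Finset.sum_eq_single (g (X ω))]
      · simp [Set.indicator_of_mem, Set.mem_preimage]
      · intro b _ hb
        exact Set.indicator_of_notMem (by simpa using fun hh => hb hh.symm) _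
      · simp
    simp_rw [hpt]
    rw [integral_finset_sum _ (fun a _ => (hint a).indicator (hfib a))]
    exact Finset.sum_congr rfl fun a _ => integral_indicator (hfib a)
  -- set integrals of φ equal those of ψ on comap-measurable fibers
  have hsetψ : ∀ (g : E → A), (∀ a, MeasurableSet {e | g e = a}) → ∀ a,
      ∫ ω in X ⁻¹' {e | g e = a}, φ a ω ∂P = ∫ ω in X ⁻¹' {e | g e = a}, ψ a ω ∂P := by
    intro g hg a
    have hsm : MeasurableSet[MeasurableSpace.comap X inferInstance] (X ⁻¹' {e | g e = a}) :=
      ⟨{e | g e = a}, hg a, rfl⟩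
    exact (setIntegral_condExp hm (hφ a) hsm).symm
  constructor
  · -- membership: construct an optimal policy
    letI : LinearOrder A := LinearOrder.lift' (Fintype.equivFin A) (Fintype.equivFin A).injective
    set S : A → Set Ω := fun a => {ω | ψ a ω = M ω ∧ ∀ b, b < a → ψ b ω ≠ M ω} with hS_def
    have h1 : ∀ b, MeasurableSet[MeasurableSpace.comap X inferInstance] {ω | ψ b ω = M ω} := by
      intro b
      have heq : {ω | ψ b ω = M ω} = ⋂ c, {ω | ψ c ω ≤ ψ b ω} := by
        ext ω
        simp only [Set.mem_setOf_eq, Set.mem_iInter]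
        constructor
        · intro h c
          rw [h]; exact hψleM c ω
        · intro h
          exact le_antisymm (hψleM b ω) (Finset.sup'_le _ _ fun c _ => h c)
      rw [heq]
      exact MeasurableSet.iInter fun c => measurableSet_le (hψm c) (hψm b)
    have hSm : ∀ a, MeasurableSet[MeasurableSpace.comap X inferInstance] (S a) := by
      intro a
      have : S a = {ω | ψ a ω = M ω} ∩ ⋂ b, ⋂ _ : b < a, {ω | ψ b ω = M ω}ᶜ := by
        ext ω
        simp only [hS_def, Set.mem_setOf_eq, Set.mem_inter_iff, Set.mem_iInter,
          Set.mem_compl_iff]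
      rw [this]
      exact (h1 a).inter (MeasurableSet.iInter fun b => MeasurableSet.iInter fun _ => (h1 b).compl)
    have hex : ∀ ω, ∃ a, ω ∈ S a := by
      intro ω
      obtain ⟨a, -, ha⟩ := Finset.exists_mem_eq_sup' Finset.univ_nonempty (fun a => ψ a ω)
      set Att : Finset A := Finset.univ.filter (fun b => ψ b ω = M ω) with hAtt
      have hAne : Att.Nonempty := ⟨a, by simp [hAtt, hM_def, ha.symm]⟩
      refine ⟨Att.min' hAne, ?_, ?_⟩
      · have := Att.min'_mem hAne
        simpa [hAtt] using this
      · intro b hb hbM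
        have hbA : b ∈ Att := by simp [hAtt, hbM]
        exact absurd (Att.min'_le b hbA) (not_le.mpr hb)
    have huniq : ∀ ω a b, ω ∈ S a → ω ∈ S b → a = b := by
      intro ω a b ha hb
      rcases lt_trichotomy a b with h | h | h
      · exact absurd ha.1 (hb.2 a h)
      · exact h
      · exact absurd hb.1 (ha.2 b h)
    choose T hTm hTX using fun a => (hSm a : ∃ s', MeasurableSet s' ∧ X ⁻¹' s' = S a)
    -- the policy
    set c : (A → Bool) → A := fun s =>
      if h : (Finset.univ.filter fun a => s a = true).Nonempty
      then (Finset.univ.filter fun a => s a = true).min' h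
      else Classical.arbitrary A with hc_def
    set d : E → (A → Bool) := fun e a => decide (e ∈ T a) with hd_def
    have hd : Measurable d := by
      refine measurable_pi_lambda _ fun a => ?_
      refine measurable_to_countable' fun y => ?_
      rcases y with _ | _
      · have : (fun e => decide (e ∈ T a)) ⁻¹' {false} = (T a)ᶜ := by
          ext e; simp [hd_def]
        rw [this]; exact (hTm a).compl
      · have : (fun e => decide (e ∈ T a)) ⁻¹' {true} = T a := by
          ext e; simp [hd_def]
        rw [this]; exact hTm a
    set g : E → A := fun e => c (d e) with hg_def
    have hg : ∀ a, MeasurableSet {e | g e = a} := by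
      intro a
      have : {e | g e = a} = d ⁻¹' {s | c s = a} := rfl
      rw [this]
      exact hd ((Set.toFinite {s | c s = a}).measurableSet)
    have hcorrect : ∀ ω a, ω ∈ S a → g (X ω) = a := by
      intro ω a ha
      have hmem : ∀ b, (d (X ω) b = true) ↔ ω ∈ S b := by
        intro b
        simp only [hd_def, decide_eq_true_eq]
        constructor
        · intro h; rw [← hTX b]; exact h
        · intro h; rw [← Set.mem_preimage, hTX b]; exact h
      have hne : (Finset.univ.filter fun b => d (X ω) b = true).Nonempty :=
        ⟨a, by simp [(hmem a).mpr ha]⟩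
      have hgx : g (X ω) = (Finset.univ.filter fun b => d (X ω) b = true).min' hne := by
        simp only [hg_def, hc_def, dif_pos hne]
      rw [hgx]
      have hmm := Finset.min'_mem (Finset.univ.filter fun b => d (X ω) b = true) hne
      rw [Finset.mem_filter] at hmm
      exact huniq ω _ a ((hmem _).mp hmm.2) ha
    have hfibS : ∀ a, X ⁻¹' {e | g e = a} = S a := by
      intro a
      ext ω
      simp only [Set.mem_preimage, Set.mem_setOf_eq]
      constructor
      · intro h
        obtain ⟨b, hb⟩ := hex ω
        have hgb : g (X ω) = b := hcorrect ω b hb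
        have : b = a := by rw [← hgb, h]
        exact this ▸ hb
      · exact hcorrect ω a
    refine ⟨g, hg, ?_⟩
    rw [key g hg φ hφ]
    have hMeq : ∀ a, ∫ ω in X ⁻¹' {e | g e = a}, φ a ω ∂P
        = ∫ ω in X ⁻¹' {e | g e = a}, M ω ∂P := by
      intro a
      rw [hsetψ g hg a, hfibS a]
      refine setIntegral_congr_fun (hm _ (hSm a)) fun ω hω => ?_
      exact hω.1
    simp_rw [hMeq]
    exact key g hg (fun _ => M) (fun _ => hMint)
  · -- upper bound
    rintro v ⟨g, hg, rfl⟩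
    rw [key g hg φ hφ]
    have hle : ∀ a, ∫ ω in X ⁻¹' {e | g e = a}, φ a ω ∂P
        ≤ ∫ ω in X ⁻¹' {e | g e = a}, M ω ∂P := by
      intro a
      rw [hsetψ g hg a]
      exact setIntegral_mono ((hψint a).integrableOn) (hMint.integrableOn) (hψleM a)
    calc ∑ a, ∫ ω in X ⁻¹' {e | g e = a}, φ a ω ∂P
        ≤ ∑ a, ∫ ω in X ⁻¹' {e | g e = a}, M ω ∂P := Finset.sum_le_sum fun a _ => hle a
      _ = ∫ ω, M ω ∂P := (key g hg (fun _ => M) (fun _ => hMint)).symm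
end
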